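/- Let W₀ be a word of length L₀ over an alphabet such that no proper nonempty prefix of W₀ is a suffix of W₀. For a word S and q ≥ 0, the map sending a word W of length n (avoiding W₀ as a factor) together with a choice of q insertion gaps (with multiplicity) to the word obtained by inserting q copies of W₀ at those gaps is injective; that is, the original word W and the insertion positions can be uniquely recovered from the result. -/

import Mathlib

/-- Insert a copy of `w0` at each gap position in `ps` (positions refer to gaps of the
original word; `ps` is processed from largest to smallest so that earlier insertions
do not shift later positions). -/
def insertBlocks {α : Type*} (w0 W : List α) (ps : List ℕ) : List α :=
  ps.foldl (fun acc p => acc.take p ++ w0 ++ acc.drop p) W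

private lemma ib_foldl_append {α : Type*} (w0 B : List α) :
    ∀ (ps : List ℕ) (A : List α), (∀ x ∈ ps, x ≤ A.length) →
      ps.foldl (fun acc p => acc.take p ++ w0 ++ acc.drop p) (A ++ B) =
      ps.foldl (fun acc p => acc.take p ++ w0 ++ acc.drop p) A ++ B := by
  intro ps
  induction ps with
  | nil => intro A _; rfl
  | cons x ps ih =>
    intro A hA
    have hx : x ≤ A.length := hA x (by simp)
    have h1 : (A ++ B).take x = A.take x := List.take_append_of_le_length hx
    have h2 : (A ++ B).drop x = A.drop x ++ B := List.drop_append_of_le_length hx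
    simp only [List.foldl_cons, h1, h2]
    rw [show A.take x ++ w0 ++ (A.drop x ++ B) = (A.take x ++ w0 ++ A.drop x) ++ B by
      simp [List.append_assoc]]
    apply ih
    intro y hy
    have := hA y (List.mem_cons_of_mem _ hy)
    simp only [List.length_append, List.length_take, List.length_drop]
    omega

private lemma ib_cons {α : Type*} (w0 W : List α) (p : ℕ) (ps : List ℕ)
    (hp : p ≤ W.length) (hps : ∀ x ∈ ps, x ≤ p) :
    insertBlocks w0 W (p :: ps) =
      insertBlocks w0 (W.take p) ps ++ (w0 ++ W.drop p) := by
  have hl : (W.take p).length = p := by simp [List.length_take, hp]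
  have : W.take p ++ w0 ++ W.drop p = W.take p ++ (w0 ++ W.drop p) := by
    simp [List.append_assoc]
  show (p :: ps).foldl _ W = _
  rw [List.foldl_cons, this, ib_foldl_append]
  · rfl
  · intro x hx; rw [hl]; exact hps x hx

private lemma ib_length {α : Type*} (w0 : List α) :
    ∀ (ps : List ℕ) (W : List α), (∀ p ∈ ps, p ≤ W.length) →
      (insertBlocks w0 W ps).length = W.length + w0.length * ps.length := by
  intro ps
  induction ps with
  | nil => intro W _; simp [insertBlocks]
  | cons p ps ih =>
    intro W hps
    have hp : p ≤ W.length := hps p (by simp)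
    show (ps.foldl _ (W.take p ++ w0 ++ W.drop p)).length = _
    have := ih (W.take p ++ w0 ++ W.drop p) (by
      intro x hx
      have := hps x (List.mem_cons_of_mem _ hx)
      simp only [List.length_append, List.length_take, List.length_drop]
      omega)
    show (insertBlocks w0 (W.take p ++ w0 ++ W.drop p) ps).length = _
    rw [this]
    simp only [List.length_append, List.length_take, List.length_drop, List.length_cons,
      Nat.mul_succ, min_eq_left hp]
    omega

/-- The key non-overlap argument: the distinguished occurrence of `w0` is rightmost. -/
private lemma no_lt {α : Type*} (w0 : List α) (hL : 1 ≤ w0.length)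
    (hpre : ∀ k, 1 ≤ k → k ≤ w0.length - 1 → w0.take k ≠ w0.drop (w0.length - k))
    (A S A' S' : List α) (h : A ++ (w0 ++ S) = A' ++ (w0 ++ S'))
    (hS : ¬ w0 <:+: S) : ¬ A.length < A'.length := by
  intro hlt
  set L₀ := w0.length with hL0
  set j := A'.length - A.length with hj
  have hj1 : 1 ≤ j := by omega
  have hdrop : (w0 ++ S).drop j = w0 ++ S' := by
    have h1 : (A ++ (w0 ++ S)).drop A'.length = (w0 ++ S).drop j := by
      rw [show A'.length = A.length + j by omega, List.drop_length_add_append]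
    have h2 : (A' ++ (w0 ++ S')).drop A'.length = w0 ++ S' := by
      simp
    rw [← h1, h, h2]
  by_cases hjL : j < L₀
  · -- overlapping occurrence: contradiction with hpre
    have hdrop2 : w0.drop j ++ S = w0 ++ S' := by
      rw [← hdrop, List.drop_append_of_le_length (by omega)]
    have htake : (w0.drop j ++ S).take (L₀ - j) = (w0 ++ S').take (L₀ - j) := by
      rw [hdrop2]
    rw [List.take_append_of_le_length (by rw [List.length_drop]),
        List.take_append_of_le_length (by omega)] at htake
    have hfull : w0.drop j = (w0.drop j).take (L₀ - j) := by
      rw [List.take_of_length_le]; simp [List.length_drop]; omega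
    have : w0.take (L₀ - j) = w0.drop (L₀ - (L₀ - j)) := by
      rw [show L₀ - (L₀ - j) = j by omega, hfull, htake]
    exact hpre (L₀ - j) (by omega) (by omega) this
  · -- occurrence entirely inside S : contradiction with avoidance
    have hd : (w0 ++ S).drop (w0.length + (j - L₀)) = S.drop (j - L₀) :=
      List.drop_length_add_append (j - L₀)
    rw [show w0.length + (j - L₀) = j by omega] at hd
    rw [hd] at hdrop
    have hpref : w0 <+: S.drop (j - L₀) := ⟨S', hdrop.symm⟩
    exact hS (hpref.isInfix.trans (List.drop_suffix _ S).isInfix)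

private lemma main_ind {α : Type*} (w0 : List α) (hL : 1 ≤ w0.length)
    (hpre : ∀ k, 1 ≤ k → k ≤ w0.length - 1 → w0.take k ≠ w0.drop (w0.length - k)) :
    ∀ (q : ℕ) (W W' : List α) (ps ps' : List ℕ), W.length = W'.length →
      ¬ w0 <:+: W → ¬ w0 <:+: W' →
      ps.length = q → ps'.length = q →
      ps.Pairwise (· ≥ ·) → ps'.Pairwise (· ≥ ·) →
      (∀ p ∈ ps, p ≤ W.length) → (∀ p ∈ ps', p ≤ W'.length) →
      insertBlocks w0 W ps = insertBlocks w0 W' ps' → W = W' ∧ ps = ps' := by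
  intro q
  induction q with
  | zero =>
    intro W W' ps ps' _ _ _ hq hq' _ _ _ _ heq
    rw [List.length_eq_zero_iff.mp hq, List.length_eq_zero_iff.mp hq'] at *
    exact ⟨heq, rfl⟩
  | succ q ih =>
    intro W W' ps ps' hlen hav hav' hq hq' hsor hsor' hle hle' heq
    obtain ⟨p, rest, rfl⟩ : ∃ p rest, ps = p :: rest := by
      cases ps with
      | nil => simp at hq
      | cons a l => exact ⟨a, l, rfl⟩
    obtain ⟨p', rest', rfl⟩ : ∃ p' rest', ps' = p' :: rest' := by
      cases ps' with
      | nil => simp at hq'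
      | cons a l => exact ⟨a, l, rfl⟩
    have hp : p ≤ W.length := hle p (by simp)
    have hp' : p' ≤ W'.length := hle' p' (by simp)
    have hrest : ∀ x ∈ rest, x ≤ p := by
      intro x hx; exact (List.pairwise_cons.mp hsor).1 x hx
    have hrest' : ∀ x ∈ rest', x ≤ p' := by
      intro x hx; exact (List.pairwise_cons.mp hsor').1 x hx
    rw [ib_cons w0 W p rest hp hrest, ib_cons w0 W' p' rest' hp' hrest'] at heq
    set A := insertBlocks w0 (W.take p) rest with hA
    set A' := insertBlocks w0 (W'.take p') rest' with hA'
    have havS : ¬ w0 <:+: W.drop p := fun h => hav (h.trans (List.drop_suffix p W).isInfix)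
    have havS' : ¬ w0 <:+: W'.drop p' := fun h => hav' (h.trans (List.drop_suffix p' W').isInfix)
    have hAA' : A.length = A'.length :=
      le_antisymm
        (le_of_not_gt (no_lt w0 hL hpre A' (W'.drop p') A (W.drop p) heq.symm havS'))
        (le_of_not_gt (no_lt w0 hL hpre A (W.drop p) A' (W'.drop p') heq havS))
    have hb : ∀ x ∈ rest, x ≤ (W.take p).length := fun x hx => by
      simp only [List.length_take]; have := hrest x hx; omega
    have hb' : ∀ x ∈ rest', x ≤ (W'.take p').length := fun x hx => by
      simp only [List.length_take]; have := hrest' x hx; omega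
    have hlA : A.length = p + w0.length * q := by
      rw [hA, ib_length w0 rest (W.take p) hb]
      simp only [List.length_take, min_eq_left hp]
      have : rest.length = q := by simpa using hq
      rw [this]
    have hlA' : A'.length = p' + w0.length * q := by
      rw [hA', ib_length w0 rest' (W'.take p') hb']
      simp only [List.length_take, min_eq_left hp']
      have : rest'.length = q := by simpa using hq'
      rw [this]
    have hpp' : p = p' := by omega
    subst hpp'
    obtain ⟨hAeq, hTeq⟩ := List.append_inj heq hAA'
    have hdropeq : W.drop p = W'.drop p := by
      exact List.append_cancel_left hTeq
    have havT : ¬ w0 <:+: W.take p := fun h => hav (h.trans (List.take_prefix p W).isInfix)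
    have havT' : ¬ w0 <:+: W'.take p := fun h => hav' (h.trans (List.take_prefix p W').isInfix)
    obtain ⟨hWtake, hresteq⟩ := ih (W.take p) (W'.take p) rest rest'
      (by simp [List.length_take]; omega) havT havT'
      (by simpa using hq) (by simpa using hq')
      (List.pairwise_cons.mp hsor).2 (List.pairwise_cons.mp hsor').2
      hb hb' hAeq
    refine ⟨?_, by rw [hresteq]⟩
    rw [← List.take_append_drop p W, ← List.take_append_drop p W', hWtake, hdropeq]

theorem stmt_10 {α : Type*} (w0 : List α) (L₀ : ℕ) (hlen : w0.length = L₀) (hL₀ : 1 ≤ L₀)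
    (hpre : ∀ k, 1 ≤ k → k ≤ L₀ - 1 → w0.take k ≠ w0.drop (L₀ - k))
    (n q : ℕ) (W W' : List α) (hW : W.length = n) (hW' : W'.length = n)
    (hav : ¬ w0 <:+: W) (hav' : ¬ w0 <:+: W')
    (ps ps' : List ℕ) (hq : ps.length = q) (hq' : ps'.length = q)
    (hsor : ps.Pairwise (· ≥ ·)) (hsor' : ps'.Pairwise (· ≥ ·))
    (hle : ∀ p ∈ ps, p ≤ n) (hle' : ∀ p ∈ ps', p ≤ n)
    (heq : insertBlocks w0 W ps = insertBlocks w0 W' ps') :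
    W = W' ∧ ps = ps' := by
  subst hlen
  exact main_ind w0 hL₀ hpre q W W' ps ps' (by omega) hav hav' hq hq' hsor hsor'
    (fun p hp => by rw [hW]; exact hle p hp) (fun p hp => by rw [hW']; exact hle' p hp) heq
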